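/- Divergence identity for the scalar curvature of a graph: with R given by the coordinate formula R = (1/(1+|∇f|²)) [ f_{ii} f_{jj} − f_{ij} f_{ij} − (2 f_j f_k/(1+|∇f|²)) ( f_{ii} f_{jk} − f_{ij} f_{ik} ) ], one has R = Σ_j ∂_j [ (1/(1+|∇f|²)) ( f_{ii} f_j − f_{ij} f_i ) ], i.e. R is the Euclidean divergence of the vector field X_j = (Δf · f_j − f_{ij} f_i)/(1+|∇f|²). -/

import Mathlib

open MeasureTheory Filter
open scoped Topology

noncomputable section

/-- The `i`-th partial derivative of `f` on `ℝⁿ`. -/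
def pd {n : ℕ} (f : EuclideanSpace ℝ (Fin n) → ℝ) (i : Fin n)
    (x : EuclideanSpace ℝ (Fin n)) : ℝ :=
  fderiv ℝ f x (EuclideanSpace.single i 1)

/-- Second partial derivatives `f_{ij}`. -/
def pd2 {n : ℕ} (f : EuclideanSpace ℝ (Fin n) → ℝ) (i j : Fin n)
    (x : EuclideanSpace ℝ (Fin n)) : ℝ :=
  pd (pd f i) j x

/-- `|∇f|²`, the squared Euclidean norm of the gradient of `f`. -/
def gradSq {n : ℕ} (f : EuclideanSpace ℝ (Fin n) → ℝ)
    (x : EuclideanSpace ℝ (Fin n)) : ℝ :=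
  ∑ i, (pd f i x) ^ 2

/-- The scalar curvature of the graph of `f`, in the coordinate form
`R = (1/(1+|∇f|²)) [ f_{ii}f_{jj} - f_{ij}f_{ij} - (2 f_j f_k/(1+|∇f|²))(f_{ii}f_{jk} - f_{ij}f_{ik}) ]`. -/
def Rsc {n : ℕ} (f : EuclideanSpace ℝ (Fin n) → ℝ)
    (x : EuclideanSpace ℝ (Fin n)) : ℝ :=
  (1 + gradSq f x)⁻¹ *
    ((∑ i, pd2 f i i x) ^ 2 - (∑ i, ∑ j, (pd2 f i j x) ^ 2)
      - 2 / (1 + gradSq f x) *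
        ∑ j, ∑ k, pd f j x * pd f k x *
          ((∑ i, pd2 f i i x) * pd2 f j k x - ∑ i, pd2 f i j x * pd2 f i k x))

section Infra

open Finset

variable {n : ℕ} {g h : EuclideanSpace ℝ (Fin n) → ℝ} {x : EuclideanSpace ℝ (Fin n)} {i : Fin n}

lemma pd_add (hg : DifferentiableAt ℝ g x) (hh : DifferentiableAt ℝ h x) :
    pd (fun y => g y + h y) i x = pd g i x + pd h i x := by
  simp [pd, fderiv_fun_add hg hh]

lemma pd_sub (hg : DifferentiableAt ℝ g x) (hh : DifferentiableAt ℝ h x) :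
    pd (fun y => g y - h y) i x = pd g i x - pd h i x := by
  simp [pd, fderiv_fun_sub hg hh]

lemma pd_mul (hg : DifferentiableAt ℝ g x) (hh : DifferentiableAt ℝ h x) :
    pd (fun y => g y * h y) i x = pd g i x * h x + g x * pd h i x := by
  simp only [pd, fderiv_fun_mul hg hh, ContinuousLinearMap.add_apply,
    ContinuousLinearMap.smul_apply, smul_eq_mul]
  ring

lemma pd_inv (hh : DifferentiableAt ℝ h x) (hne : h x ≠ 0) :
    pd (fun y => (h y)⁻¹) i x = -pd h i x / (h x) ^ 2 := by
  have H : HasFDerivAt (fun y => (h y)⁻¹)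
      ((-ContinuousLinearMap.mulLeftRight ℝ ℝ (h x)⁻¹ (h x)⁻¹).comp (fderiv ℝ h x)) x :=
    (hasFDerivAt_inv' hne).comp x hh.hasFDerivAt
  rw [pd, H.fderiv]
  simp only [ContinuousLinearMap.comp_apply, ContinuousLinearMap.neg_apply,
    ContinuousLinearMap.mulLeftRight_apply, pd]
  field_simp

lemma pd_div (hg : DifferentiableAt ℝ g x) (hh : DifferentiableAt ℝ h x) (hne : h x ≠ 0) :
    pd (fun y => g y / h y) i x = (pd g i x * h x - g x * pd h i x) / (h x) ^ 2 := by
  have e : (fun y => g y / h y) = fun y => g y * (h y)⁻¹ := by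
    funext y; rw [div_eq_mul_inv]
  rw [e, pd_mul (h := fun y => (h y)⁻¹) hg (hh.inv hne), pd_inv hh hne]
  field_simp
  ring

lemma pd_const_add (c : ℝ) (hg : DifferentiableAt ℝ g x) :
    pd (fun y => c + g y) i x = pd g i x := by
  simp [pd, fderiv_const_add]

lemma pd_sum {ι : Type*} (s : Finset ι) (F : ι → EuclideanSpace ℝ (Fin n) → ℝ)
    (hF : ∀ j ∈ s, DifferentiableAt ℝ (F j) x) :
    pd (fun y => ∑ j ∈ s, F j y) i x = ∑ j ∈ s, pd (F j) i x := by
  simp [pd, fderiv_fun_sum hF]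

lemma pd_sq (hg : DifferentiableAt ℝ g x) :
    pd (fun y => g y ^ 2) i x = 2 * g x * pd g i x := by
  have : (fun y => g y ^ 2) = fun y => g y * g y := by ext y; ring
  rw [this, pd_mul hg hg]; ring

lemma contDiff_pd {m : WithTop ℕ∞} (hf : ContDiff ℝ (m + 1) g) (i : Fin n) :
    ContDiff ℝ m (pd g i) := by
  unfold pd
  exact (ContinuousLinearMap.apply ℝ ℝ (EuclideanSpace.single i 1)).contDiff.comp
    (hf.fderiv_right le_rfl)

lemma pd2_eq_sndFDeriv (hg : ContDiff ℝ 2 g) (i j : Fin n) (y : EuclideanSpace ℝ (Fin n)) :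
    pd2 g i j y = fderiv ℝ (fderiv ℝ g) y (EuclideanSpace.single j 1)
      (EuclideanSpace.single i 1) := by
  have hdf : DifferentiableAt ℝ (fderiv ℝ g) y :=
    ((hg.fderiv_right (m := 1) (by norm_num)).differentiable (by norm_num)).differentiableAt
  have : pd2 g i j y =
      fderiv ℝ (fun z => (fderiv ℝ g z) (EuclideanSpace.single i 1)) y
        (EuclideanSpace.single j 1) := rfl
  rw [this, fderiv_clm_apply hdf (differentiableAt_const _)]
  simp

lemma pd2_symm (hg : ContDiff ℝ 2 g) (i j : Fin n) (y : EuclideanSpace ℝ (Fin n)) :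
    pd2 g i j y = pd2 g j i y := by
  rw [pd2_eq_sndFDeriv hg, pd2_eq_sndFDeriv hg]
  exact (hg.contDiffAt.isSymmSndFDerivAt (by norm_num)).eq _ _

lemma key_algebra {n : ℕ} (u : Fin n → ℝ) (h : Fin n → Fin n → ℝ)
    (T : Fin n → Fin n → Fin n → ℝ) (W : ℝ) (hW : W ≠ 0)
    (hsym : ∀ i j, h i j = h j i)
    (hT1 : ∀ a b c, T a b c = T b a c) (hT2 : ∀ a b c, T a b c = T a c b) :
    W⁻¹ * ((∑ i, h i i) ^ 2 - (∑ i, ∑ j, (h i j) ^ 2)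
      - 2 / W * ∑ j, ∑ k, u j * u k * ((∑ i, h i i) * h j k - ∑ i, h i j * h i k))
    = ∑ j, (((∑ i, T i i j) * u j + (∑ i, h i i) * h j j
        - ∑ i, (T i j j * u i + h i j * h i j)) * W
        - ((∑ i, h i i) * u j - ∑ i, h i j * u i) * (∑ i, 2 * u i * h i j)) / W ^ 2 := by
  have F1 : (∑ j, (∑ i, T i i j) * u j) = ∑ j, ∑ i, T i j j * u i := by
    calc ∑ j, (∑ i, T i i j) * u j
        = ∑ j, ∑ i, T j i i * u j := by
          refine Finset.sum_congr rfl fun j _ => ?_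
          rw [Finset.sum_mul]
          refine Finset.sum_congr rfl fun i _ => ?_
          rw [show T i i j = T j i i by rw [hT2 i i j, hT1 i j i]]
      _ = ∑ i, ∑ j, T j i i * u j := Finset.sum_comm (f := fun j i => T j i i * u j)
  have F3 : (∑ j, ∑ i, h i j * h i j) = ∑ i, ∑ j, (h i j) ^ 2 := by
    rw [Finset.sum_comm]
    exact Finset.sum_congr rfl fun i _ =>
      Finset.sum_congr rfl fun j _ => (pow_two (h i j)).symm
  have F5 : (∑ j, ((∑ i, h i i) * u j - ∑ i, h i j * u i) * (∑ i, 2 * u i * h i j))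
      = 2 * ∑ j, ∑ k, u j * u k * ((∑ i, h i i) * h j k - ∑ i, h i j * h i k) := by
    have lhs_eq : ∀ j, ((∑ i, h i i) * u j - ∑ i, h i j * u i) * (∑ i, 2 * u i * h i j)
        = (∑ k, 2 * ((∑ i, h i i) * (u j * u k * h j k)))
          - ∑ i, ∑ k, 2 * (u i * u k * (h j i * h j k)) := by
      intro j
      rw [sub_mul]
      congr 1
      · rw [Finset.mul_sum univ (fun i => 2 * u i * h i j) ((∑ i, h i i) * u j)]
        refine Finset.sum_congr rfl fun k _ => ?_
        rw [hsym k j]; ring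
      · rw [Finset.sum_mul_sum]
        refine Finset.sum_congr rfl fun i _ => Finset.sum_congr rfl fun k _ => ?_
        rw [hsym i j, hsym k j]; ring
    have rhs_eq : ∀ j, 2 * (∑ k, u j * u k * ((∑ i, h i i) * h j k - ∑ i, h i j * h i k))
        = (∑ k, 2 * ((∑ i, h i i) * (u j * u k * h j k)))
          - ∑ k, ∑ i, 2 * (u j * u k * (h i j * h i k)) := by
      intro j
      rw [Finset.mul_sum, ← Finset.sum_sub_distrib]
      refine Finset.sum_congr rfl fun k _ => ?_
      have inner : (2 * (u j * u k)) * (∑ i, h i j * h i k)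
          = ∑ i, 2 * (u j * u k * (h i j * h i k)) := by
        rw [Finset.mul_sum]
        exact Finset.sum_congr rfl fun i _ => by ring
      rw [← inner]; ring
    have triple : (∑ j, ∑ i, ∑ k, 2 * (u i * u k * (h j i * h j k)))
        = ∑ j, ∑ k, ∑ i, 2 * (u j * u k * (h i j * h i k)) := by
      calc ∑ j, ∑ i, ∑ k, 2 * (u i * u k * (h j i * h j k))
          = ∑ i, ∑ j, ∑ k, 2 * (u i * u k * (h j i * h j k)) :=
            Finset.sum_comm (f := fun j i => ∑ k, 2 * (u i * u k * (h j i * h j k)))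
        _ = ∑ i, ∑ k, ∑ j, 2 * (u i * u k * (h j i * h j k)) :=
            Finset.sum_congr rfl fun i _ =>
              Finset.sum_comm (f := fun j k => 2 * (u i * u k * (h j i * h j k)))
    calc ∑ j, ((∑ i, h i i) * u j - ∑ i, h i j * u i) * (∑ i, 2 * u i * h i j)
        = ∑ j, ((∑ k, 2 * ((∑ i, h i i) * (u j * u k * h j k)))
            - ∑ i, ∑ k, 2 * (u i * u k * (h j i * h j k))) :=
          Finset.sum_congr rfl fun j _ => lhs_eq j
      _ = (∑ j, ∑ k, 2 * ((∑ i, h i i) * (u j * u k * h j k)))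
            - ∑ j, ∑ i, ∑ k, 2 * (u i * u k * (h j i * h j k)) := Finset.sum_sub_distrib _ _
      _ = (∑ j, ∑ k, 2 * ((∑ i, h i i) * (u j * u k * h j k)))
            - ∑ j, ∑ k, ∑ i, 2 * (u j * u k * (h i j * h i k)) := by rw [triple]
      _ = ∑ j, 2 * (∑ k, u j * u k * ((∑ i, h i i) * h j k - ∑ i, h i j * h i k)) := by
          rw [← Finset.sum_sub_distrib]
          exact Finset.sum_congr rfl fun j _ => (rhs_eq j).symm
      _ = 2 * ∑ j, ∑ k, u j * u k * ((∑ i, h i i) * h j k - ∑ i, h i j * h i k) := by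
          rw [Finset.mul_sum]
  have expand : ∀ j ∈ (Finset.univ : Finset (Fin n)),
      ((((∑ i, T i i j) * u j + (∑ i, h i i) * h j j
        - ∑ i, (T i j j * u i + h i j * h i j)) * W
        - ((∑ i, h i i) * u j - ∑ i, h i j * u i) * (∑ i, 2 * u i * h i j)) / W ^ 2)
      = (W * ((∑ i, T i i j) * u j) - W * (∑ i, T i j j * u i)
          + (W * ((∑ i, h i i) * h j j) - W * (∑ i, h i j * h i j))
          - ((∑ i, h i i) * u j - ∑ i, h i j * u i) * (∑ i, 2 * u i * h i j)) / W ^ 2 := by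
    intro j _
    rw [Finset.sum_add_distrib]
    ring
  rw [Finset.sum_congr rfl expand, ← Finset.sum_div]
  have NUM : (∑ j, (W * ((∑ i, T i i j) * u j) - W * (∑ i, T i j j * u i)
          + (W * ((∑ i, h i i) * h j j) - W * (∑ i, h i j * h i j))
          - ((∑ i, h i i) * u j - ∑ i, h i j * u i) * (∑ i, 2 * u i * h i j)))
      = W * (∑ i, h i i) ^ 2 - W * (∑ i, ∑ j, (h i j) ^ 2)
        - 2 * ∑ j, ∑ k, u j * u k * ((∑ i, h i i) * h j k - ∑ i, h i j * h i k) := by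
    rw [Finset.sum_sub_distrib, Finset.sum_add_distrib, Finset.sum_sub_distrib,
        Finset.sum_sub_distrib, F5]
    have e1 : (∑ j, W * ((∑ i, T i i j) * u j)) = ∑ j, W * (∑ i, T i j j * u i) := by
      rw [← Finset.mul_sum, ← Finset.mul_sum, F1]
    have e2 : (∑ j, W * ((∑ i, h i i) * h j j)) = W * (∑ i, h i i) ^ 2 := by
      rw [← Finset.mul_sum]
      congr 1
      rw [← Finset.mul_sum, pow_two]
    have e3 : (∑ j, W * (∑ i, h i j * h i j)) = W * (∑ i, ∑ j, (h i j) ^ 2) := by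
      rw [← Finset.mul_sum, F3]
    rw [e1, e2, e3]
    ring
  rw [NUM]
  field_simp


end Infra

/-- the scalar curvature of the graph of `f` is the Euclidean divergence of
the vector field `X_j = (f_{ii} f_j - f_{ij} f_i)/(1 + |∇f|²)`. -/
theorem scalar_curvature_eq_divergence {n : ℕ} (f : EuclideanSpace ℝ (Fin n) → ℝ)
    (hf : ContDiff ℝ 3 f) (x : EuclideanSpace ℝ (Fin n)) :
    Rsc f x =
      ∑ j, pd (fun y =>
        ((∑ i, pd2 f i i y) * pd f j y - ∑ i, pd2 f i j y * pd f i y) / (1 + gradSq f y)) j x := by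
  have hf2 : ContDiff ℝ 2 f := hf.of_le (by norm_num)
  have hfp : ∀ i, ContDiff ℝ 2 (pd f i) := by
    intro i
    refine contDiff_pd (m := 2) ?_ i
    have e : ((2 : WithTop ℕ∞) + 1) = 3 := by norm_num
    rw [e]; exact hf
  have hfp2 : ∀ i j, ContDiff ℝ 1 (pd2 f i j) := by
    intro i j
    refine contDiff_pd (m := 1) ?_ j
    have e : ((1 : WithTop ℕ∞) + 1) = 2 := by norm_num
    rw [e]; exact hfp i
  have du : ∀ i, DifferentiableAt ℝ (pd f i) x :=
    fun i => ((hfp i).differentiable (by norm_num)).differentiableAt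
  have dh : ∀ i j, DifferentiableAt ℝ (pd2 f i j) x :=
    fun i j => ((hfp2 i j).differentiable (by norm_num)).differentiableAt
  have dS : DifferentiableAt ℝ (fun y => ∑ i, pd2 f i i y) x :=
    DifferentiableAt.fun_sum fun i _ => dh i i
  have egrad : gradSq f = fun y => ∑ i, pd f i y ^ 2 := rfl
  have dgrad : DifferentiableAt ℝ (gradSq f) x := by
    rw [egrad]; exact DifferentiableAt.fun_sum fun i _ => (du i).pow 2
  have dW : DifferentiableAt ℝ (fun y => 1 + gradSq f y) x :=
    (differentiableAt_const (1 : ℝ)).add dgrad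
  have hWpos : 0 < 1 + gradSq f x := by
    have : 0 ≤ gradSq f x := Finset.sum_nonneg fun i _ => sq_nonneg _
    linarith
  have hWne : 1 + gradSq f x ≠ 0 := ne_of_gt hWpos
  have dA : ∀ j, DifferentiableAt ℝ
      (fun y => (∑ i, pd2 f i i y) * pd f j y - ∑ i, pd2 f i j y * pd f i y) x :=
    fun j => (dS.mul (du j)).sub (DifferentiableAt.fun_sum fun i _ => (dh i j).mul (du i))
  -- derivative of the weight
  have hpdW : ∀ j : Fin n, pd (fun y => 1 + gradSq f y) j x
      = ∑ i, 2 * pd f i x * pd2 f i j x := by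
    intro j
    rw [pd_const_add _ dgrad, egrad, pd_sum _ (fun i y => pd f i y ^ 2) (fun i _ => (du i).pow 2)]
    exact Finset.sum_congr rfl fun i _ => by rw [pd_sq (du i)]; rfl
  -- derivative of the numerator
  have hpdA : ∀ j : Fin n,
      pd (fun y => (∑ i, pd2 f i i y) * pd f j y - ∑ i, pd2 f i j y * pd f i y) j x
      = ((∑ i, pd (pd2 f i i) j x) * pd f j x + (∑ i, pd2 f i i x) * pd2 f j j x)
        - ∑ i, (pd (pd2 f i j) j x * pd f i x + pd2 f i j x * pd2 f i j x) := by
    intro j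
    rw [pd_sub (g := fun y => (∑ i, pd2 f i i y) * pd f j y)
        (h := fun y => ∑ i, pd2 f i j y * pd f i y) (dS.mul (du j)) (DifferentiableAt.fun_sum fun i _ => (dh i j).mul (du i)),
        pd_mul dS (du j), pd_sum _ (fun i y => pd2 f i j y * pd f i y) (fun i _ => (dh i j).mul (du i)),
        pd_sum _ _ (fun i _ => dh i i)]
    congr 1
    exact Finset.sum_congr rfl fun i _ => by rw [pd_mul (dh i j) (du i)]; rfl
  -- each summand
  have hterm : ∀ j ∈ (Finset.univ : Finset (Fin n)),
      pd (fun y =>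
        ((∑ i, pd2 f i i y) * pd f j y - ∑ i, pd2 f i j y * pd f i y) / (1 + gradSq f y)) j x
      = (((∑ i, pd (pd2 f i i) j x) * pd f j x + (∑ i, pd2 f i i x) * pd2 f j j x
          - ∑ i, (pd (pd2 f i j) j x * pd f i x + pd2 f i j x * pd2 f i j x)) * (1 + gradSq f x)
          - ((∑ i, pd2 f i i x) * pd f j x - ∑ i, pd2 f i j x * pd f i x)
            * (∑ i, 2 * pd f i x * pd2 f i j x)) / (1 + gradSq f x) ^ 2 := by
    intro j _
    rw [pd_div (dA j) dW hWne, hpdA j, hpdW j]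
  rw [Finset.sum_congr rfl hterm]
  -- symmetry facts
  have hsym : ∀ i j : Fin n, pd2 f i j x = pd2 f j i x := fun i j => pd2_symm hf2 i j x
  have hsymfun : ∀ i j : Fin n, pd2 f i j = pd2 f j i :=
    fun i j => funext fun y => pd2_symm hf2 i j y
  have hT1 : ∀ a b c : Fin n, pd (pd2 f a b) c x = pd (pd2 f b a) c x := by
    intro a b c; rw [hsymfun a b]
  have hT2 : ∀ a b c : Fin n, pd (pd2 f a b) c x = pd (pd2 f a c) b x := by
    intro a b c
    exact pd2_symm (hfp a) b c x
  have KEY := key_algebra (fun i => pd f i x) (fun i j => pd2 f i j x)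
    (fun a b c => pd (pd2 f a b) c x) (1 + gradSq f x) hWne hsym hT1 hT2
  calc Rsc f x
      = (1 + gradSq f x)⁻¹ *
        ((∑ i, pd2 f i i x) ^ 2 - (∑ i, ∑ j, (pd2 f i j x) ^ 2)
          - 2 / (1 + gradSq f x) *
            ∑ j, ∑ k, pd f j x * pd f k x *
              ((∑ i, pd2 f i i x) * pd2 f j k x - ∑ i, pd2 f i j x * pd2 f i k x)) := rfl
    _ = _ := by
        rw [KEY]
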